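/- arXiv:2310.13621 — 4 statements merged into one kernel-verified Lean document; each statement's English description precedes it below -/
import Mathlib

section
/- Let n ≥ 2 and let P = C_{2^n} ≀ C_2. Then the automorphism group Aut(P) is a 2-group. -/
open Equiv

/-- The action of `Equiv.Perm ι` on `ι → G` by permuting coordinates. -/
def permAut (ι G : Type*) [Group G] : Equiv.Perm ι →* MulAut (ι → G) where
  toFun σ := MulEquiv.arrowCongr σ (MulEquiv.refl G)
  map_one' := by ext f x; rfl
  map_mul' σ τ := by ext f x; rfl

/-- The regular wreath product `C_{2^n} ≀ C₂`, realized as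
`(C_{2^n} × C_{2^n}) ⋊ C₂` where `C₂` (realized as `Equiv.Perm (Fin 2)`)
acts by swapping the two coordinates of the base group. -/
abbrev WreathC2 (n : ℕ) :=
  SemidirectProduct (Fin 2 → Multiplicative (ZMod (2 ^ n))) (Equiv.Perm (Fin 2))
    (permAut (Fin 2) (Multiplicative (ZMod (2 ^ n))))




namespace WC
variable {n : ℕ}

@[simp] lemma permAut_apply (σ : Perm (Fin 2)) (f : Fin 2 → Multiplicative (ZMod (2^n))) (i : Fin 2) :
    (permAut (Fin 2) (Multiplicative (ZMod (2^n))) σ) f i = f (σ.symm i) := rfl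

lemma perm_cases (s : Perm (Fin 2)) : s = 1 ∨ s = Equiv.swap (0:Fin 2) (1:Fin 2) := by
  revert s; decide

lemma base_mul (f g : Fin 2 → Multiplicative (ZMod (2^n))) :
    (⟨f, 1⟩ : WreathC2 n) * ⟨g, 1⟩ = ⟨f * g, 1⟩ := by
  ext <;> simp

lemma base_pow (f : Fin 2 → Multiplicative (ZMod (2^n))) (k : ℕ) :
    (⟨f, 1⟩ : WreathC2 n) ^ k = ⟨f ^ k, 1⟩ := by
  induction k with
  | zero => ext <;> simp
  | succ k ih => rw [pow_succ, ih, base_mul, pow_succ]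

lemma vec_mul (x y x' y' : Multiplicative (ZMod (2^n))) :
    (![x, y] : Fin 2 → _) * ![x', y'] = ![x * x', y * y'] := by
  funext i; fin_cases i <;> simp

lemma vec_pow (x y : Multiplicative (ZMod (2^n))) (k : ℕ) :
    (![x, y] : Fin 2 → _) ^ k = ![x ^ k, y ^ k] := by
  funext i; fin_cases i <;> simp

lemma fun_eta (f : Fin 2 → Multiplicative (ZMod (2^n))) : f = ![f 0, f 1] := by
  funext i; fin_cases i <;> rfl

lemma one_vec : (1 : Fin 2 → Multiplicative (ZMod (2^n))) = ![1, 1] := by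
  funext i; fin_cases i <;> rfl

end WC

namespace WC
variable {n : ℕ}

lemma commute_conj (p g : WreathC2 n) (hp : p.right = 1) : Commute p (g * p * g⁻¹) := by
  have hq : (g * p * g⁻¹).right = 1 := by
    simp [SemidirectProduct.mul_right, SemidirectProduct.inv_right, hp]
  show _ = _
  ext
  · simp [SemidirectProduct.mul_left, hp, hq, mul_comm]
  · simp [SemidirectProduct.mul_right, hp, hq]

end WC

namespace WC
variable {n : ℕ}

lemma two_ne_zero' (hn : 2 ≤ n) : (2 : ZMod (2^n)) ≠ 0 := by
  intro h
  have h2 : ((2:ℕ) : ZMod (2^n)) = 0 := by exact_mod_cast h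
  have h3 : (2^n : ℕ) ∣ 2 := by
    haveI : NeZero (2^n) := ⟨by positivity⟩
    exact (ZMod.natCast_eq_zero_iff 2 (2^n)).mp h2
  have h4 : (4:ℕ) ≤ 2^n := by
    calc (4:ℕ) = 2^2 := rfl
    _ ≤ 2^n := Nat.pow_le_pow_right (by norm_num) hn
  have := Nat.le_of_dvd (by norm_num) h3
  omega

lemma right_eq_one (ψ : MulAut (WreathC2 n)) (hn : 2 ≤ n) (p : WreathC2 n) (hp : p.right = 1) :
    (ψ p).right = 1 := by
  rcases perm_cases ((ψ p).right) with h | h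
  · exact h
  exfalso
  have hcq : ∀ g : WreathC2 n, Commute (ψ p) (g * ψ p * g⁻¹) := by
    intro g
    have hc := (commute_conj p (ψ.symm g) hp).map ψ.toMonoidHom
    simpa using hc
  set w : Multiplicative (ZMod (2^n)) := Multiplicative.ofAdd 1 with hw
  have heq := (hcq ⟨![w, 1], 1⟩).eq
  have heq0 := congrArg (fun z : WreathC2 n => z.left 0) heq
  simp [SemidirectProduct.mul_left, SemidirectProduct.inv_left, h] at heq0
  have ht := congrArg Multiplicative.toAdd heq0
  simp only [toAdd_mul, toAdd_inv, hw, toAdd_ofAdd] at ht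
  exact two_ne_zero' hn (by linear_combination -ht)

end WC

namespace WC
variable {n : ℕ}

lemma right_eq (ψ : MulAut (WreathC2 n)) (hn : 2 ≤ n) (p : WreathC2 n) :
    (ψ p).right = p.right := by
  rcases perm_cases p.right with h | h
  · rw [h]; exact right_eq_one ψ hn p h
  · rcases perm_cases ((ψ p).right) with h' | h'
    · exfalso
      set z := ψ.symm ⟨1, Equiv.swap 0 1⟩ with hz
      have hz' : ψ z = ⟨1, Equiv.swap 0 1⟩ := ψ.apply_symm_apply _
      rcases perm_cases z.right with h1 | h1
      · have := right_eq_one ψ hn z h1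
        rw [hz'] at this
        have hbad : Equiv.swap (0:Fin 2) 1 = 1 := this
        exact absurd hbad (by decide)
      · have hr : (z * p⁻¹).right = 1 := by
          simp [SemidirectProduct.mul_right, SemidirectProduct.inv_right, h1, h]
        have := right_eq_one ψ hn (z * p⁻¹) hr
        rw [map_mul, map_inv, hz'] at this
        rw [SemidirectProduct.mul_right, SemidirectProduct.inv_right, h'] at this
        have hbad : Equiv.swap (0:Fin 2) 1 * 1⁻¹ = 1 := this
        exact absurd hbad (by decide)
    · rw [h, h']

end WC

namespace WC
variable {n : ℕ}

lemma sigma_decomp (f : Fin 2 → Multiplicative (ZMod (2^n))) :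
    (⟨f, Equiv.swap 0 1⟩ : WreathC2 n) = ⟨f, 1⟩ * ⟨1, Equiv.swap 0 1⟩ := by
  ext <;> simp

lemma conj_sigma (v g : Fin 2 → Multiplicative (ZMod (2^n))) :
    (⟨v, Equiv.swap 0 1⟩ : WreathC2 n) * ⟨g, 1⟩ * ⟨v, Equiv.swap 0 1⟩⁻¹ = ⟨![g 1, g 0], 1⟩ := by
  ext i
  · simp [SemidirectProduct.mul_left, SemidirectProduct.inv_left,
      SemidirectProduct.mul_right]
    fin_cases i <;> simp [mul_comm, mul_assoc, mul_left_comm]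
  · simp [SemidirectProduct.mul_right, SemidirectProduct.inv_right]

end WC

namespace WC
variable {n : ℕ}

instance : NeZero (2^n) := ⟨by positivity⟩

noncomputable def uu (n : ℕ) : Multiplicative (ZMod (2^n)) := Multiplicative.ofAdd 1

lemma u_pow (k : ℕ) : (uu n) ^ k = Multiplicative.ofAdd ((k : ZMod (2^n))) := by
  simp [uu, ← ofAdd_nsmul, nsmul_eq_mul]

lemma u_pow_val (x : Multiplicative (ZMod (2^n))) : (uu n) ^ (Multiplicative.toAdd x).val = x := by
  rw [u_pow, ZMod.natCast_val, ZMod.cast_id]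
  simp

/-- images of the two generators of the base -/
noncomputable def aOf (ψ : MulAut (WreathC2 n)) : Multiplicative (ZMod (2^n)) :=
  (ψ ⟨![uu n, 1], 1⟩).left 0

noncomputable def bOf (ψ : MulAut (WreathC2 n)) : Multiplicative (ZMod (2^n)) :=
  (ψ ⟨![uu n, 1], 1⟩).left 1

lemma psi_e0 (ψ : MulAut (WreathC2 n)) (hn : 2 ≤ n) :
    ψ ⟨![uu n, 1], 1⟩ = ⟨![aOf ψ, bOf ψ], 1⟩ := by
  have hr := right_eq_one ψ hn ⟨![uu n, 1], 1⟩ rfl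
  refine SemidirectProduct.ext ?_ hr
  funext i; fin_cases i <;> rfl

lemma psi_t (ψ : MulAut (WreathC2 n)) (hn : 2 ≤ n) :
    ψ ⟨1, Equiv.swap 0 1⟩ = ⟨(ψ ⟨1, Equiv.swap 0 1⟩).left, Equiv.swap 0 1⟩ := by
  have hr := right_eq ψ hn ⟨1, Equiv.swap 0 1⟩
  exact SemidirectProduct.ext rfl hr

lemma psi_e1 (ψ : MulAut (WreathC2 n)) (hn : 2 ≤ n) :
    ψ ⟨![1, uu n], 1⟩ = ⟨![bOf ψ, aOf ψ], 1⟩ := by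
  have key : (⟨1, Equiv.swap 0 1⟩ : WreathC2 n) * ⟨![uu n, 1], 1⟩ * ⟨1, Equiv.swap 0 1⟩⁻¹
      = ⟨![1, uu n], 1⟩ := by
    rw [conj_sigma]; simp
  calc ψ ⟨![1, uu n], 1⟩
      = ψ (⟨1, Equiv.swap 0 1⟩ * ⟨![uu n, 1], 1⟩ * ⟨1, Equiv.swap 0 1⟩⁻¹) := by rw [key]
    _ = ψ ⟨1, Equiv.swap 0 1⟩ * ψ ⟨![uu n, 1], 1⟩ * (ψ ⟨1, Equiv.swap 0 1⟩)⁻¹ := by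
        rw [map_mul, map_mul, map_inv]
    _ = ⟨![bOf ψ, aOf ψ], 1⟩ := by
        rw [psi_t ψ hn, psi_e0 ψ hn, conj_sigma]
        simp

lemma formulaF (ψ : MulAut (WreathC2 n)) (hn : 2 ≤ n) (x y : Multiplicative (ZMod (2^n))) :
    ψ ⟨![x, y], 1⟩ =
      ⟨![(aOf ψ) ^ (Multiplicative.toAdd x).val * (bOf ψ) ^ (Multiplicative.toAdd y).val,
         (bOf ψ) ^ (Multiplicative.toAdd x).val * (aOf ψ) ^ (Multiplicative.toAdd y).val], 1⟩ := by
  have hdec : (⟨![x, y], 1⟩ : WreathC2 n) = ⟨![uu n, 1], 1⟩ ^ (Multiplicative.toAdd x).val * ⟨![1, uu n], 1⟩ ^ (Multiplicative.toAdd y).val := by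
    rw [base_pow, base_pow, vec_pow, vec_pow, base_mul, vec_mul]
    simp [u_pow_val]
  rw [hdec, map_mul, map_pow, map_pow, psi_e0 ψ hn, psi_e1 ψ hn,
    base_pow, base_pow, vec_pow, vec_pow, base_mul, vec_mul]

end WC

namespace WC
variable {n : ℕ}

lemma unit_sum (ψ : MulAut (WreathC2 n)) (hn : 2 ≤ n) :
    IsUnit (Multiplicative.toAdd (aOf ψ) + Multiplicative.toAdd (bOf ψ)) := by
  set p := ψ.symm ⟨![uu n, 1], 1⟩ with hpdef
  have hp : ψ p = ⟨![uu n, 1], 1⟩ := ψ.apply_symm_apply _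
  have hpr : p.right = 1 := by
    have := right_eq ψ hn p
    rw [hp] at this
    exact this.symm
  have hpe : p = ⟨![p.left 0, p.left 1], 1⟩ := by
    refine SemidirectProduct.ext ?_ hpr
    exact fun_eta p.left
  have hF := formulaF ψ hn (p.left 0) (p.left 1)
  rw [← hpe, hp] at hF
  have h0 := congrArg (fun z : WreathC2 n => Multiplicative.toAdd (z.left 0)) hF
  have h1 := congrArg (fun z : WreathC2 n => Multiplicative.toAdd (z.left 1)) hF
  simp only [Matrix.cons_val_zero, Matrix.cons_val_one, Matrix.head_cons, toAdd_mul] at h0 h1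
  set α := Multiplicative.toAdd (aOf ψ)
  set β := Multiplicative.toAdd (bOf ψ)
  set i := (Multiplicative.toAdd (p.left 0)).val
  set j := (Multiplicative.toAdd (p.left 1)).val
  have hpow : ∀ (c : Multiplicative (ZMod (2^n))) (k : ℕ),
      Multiplicative.toAdd (c ^ k) = (k : ZMod (2^n)) * Multiplicative.toAdd c := by
    intro c k
    rw [toAdd_pow]
    rw [nsmul_eq_mul]
  simp only [hpow, uu, toAdd_ofAdd, toAdd_one] at h0 h1
  exact IsUnit.of_mul_eq_one ((i : ZMod (2^n)) + (j : ZMod (2^n)))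
    (by linear_combination - h0 - h1)

end WC

namespace WC

def Aseq (α β : ℤ) : ℕ → ℤ × ℤ
  | 0 => (1, 0)
  | k+1 => ((Aseq α β k).1 * α + (Aseq α β k).2 * β,
            (Aseq α β k).1 * β + (Aseq α β k).2 * α)

lemma Aseq_add (α β : ℤ) (k : ℕ) :
    (Aseq α β k).1 + (Aseq α β k).2 = (α + β) ^ k := by
  induction k with
  | zero => simp [Aseq]
  | succ k ih => rw [pow_succ, ← ih]; simp [Aseq]; ring

lemma Aseq_sub (α β : ℤ) (k : ℕ) :
    (Aseq α β k).1 - (Aseq α β k).2 = (α - β) ^ k := by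
  induction k with
  | zero => simp [Aseq]
  | succ k ih => rw [pow_succ, ← ih]; simp [Aseq]; ring

lemma odd_pow_sub_one (x : ℤ) (hx : Odd x) (m : ℕ) : (2:ℤ)^(m+1) ∣ x ^ (2^m) - 1 := by
  induction m with
  | zero =>
    obtain ⟨k, hk⟩ := hx
    simp only [pow_zero, pow_one, zero_add]
    exact ⟨k, by omega⟩
  | succ m ih =>
    have h2 : x ^ (2^(m+1)) - 1 = (x ^ (2^m) - 1) * (x ^ (2^m) + 1) := by
      rw [pow_succ, pow_mul]; ring
    rw [h2, pow_succ]
    have hodd : Odd (x ^ (2^m)) := hx.pow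
    obtain ⟨k, hk⟩ := hodd
    exact mul_dvd_mul ih ⟨k + 1, by omega⟩

lemma Aseq_key (α β : ℤ) (hodd : Odd (α + β)) (n : ℕ) :
    (2^n : ℤ) ∣ (Aseq α β (2^n)).1 - 1 ∧ (2^n : ℤ) ∣ (Aseq α β (2^n)).2 := by
  have hodd' : Odd (α - β) := by
    have : α - β = (α + β) - 2 * β := by ring
    rw [this]
    exact hodd.sub_even (even_two_mul β)
  have h1 := odd_pow_sub_one (α+β) hodd n
  have h2 := odd_pow_sub_one (α-β) hodd' n
  rw [← Aseq_add α β (2^n)] at h1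
  rw [← Aseq_sub α β (2^n)] at h2
  constructor
  · have : (2:ℤ)^(n+1) ∣ 2 * ((Aseq α β (2^n)).1 - 1) := by
      have := dvd_add h1 h2
      convert this using 1; rfl; ring
    rw [pow_succ'] at this
    exact (mul_dvd_mul_iff_left (by norm_num : (2:ℤ) ≠ 0)).mp this
  · have : (2:ℤ)^(n+1) ∣ 2 * (Aseq α β (2^n)).2 := by
      have := dvd_sub h1 h2
      convert this using 1; rfl; ring
    rw [pow_succ'] at this
    exact (mul_dvd_mul_iff_left (by norm_num : (2:ℤ) ≠ 0)).mp this

end WC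

namespace WC
variable {n : ℕ}

lemma vec_congr (x0 x1 y0 y1 : Multiplicative (ZMod (2^n))) (h0 : x0 = y0) (h1 : x1 = y1) :
    (![x0, x1] : Fin 2 → _) = ![y0, y1] := by rw [h0, h1]

lemma pow_pow_eq (a b : Multiplicative (ZMod (2^n))) (X Y : ℤ) :
    a ^ ((X : ZMod (2^n)).val) * b ^ ((Y : ZMod (2^n)).val)
      = Multiplicative.ofAdd ((X : ZMod (2^n)) * Multiplicative.toAdd a
          + (Y : ZMod (2^n)) * Multiplicative.toAdd b) := by
  apply Multiplicative.toAdd.injective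
  simp [toAdd_pow, nsmul_eq_mul, ZMod.natCast_val, ZMod.cast_id]

lemma iter_e0 (ψ : MulAut (WreathC2 n)) (hn : 2 ≤ n) (k : ℕ) :
    (ψ ^ k) ⟨![uu n, 1], 1⟩ =
      ⟨![Multiplicative.ofAdd
            (((Aseq ((Multiplicative.toAdd (aOf ψ)).val : ℤ) ((Multiplicative.toAdd (bOf ψ)).val : ℤ) k).1 : ZMod (2^n))),
         Multiplicative.ofAdd
            (((Aseq ((Multiplicative.toAdd (aOf ψ)).val : ℤ) ((Multiplicative.toAdd (bOf ψ)).val : ℤ) k).2 : ZMod (2^n)))], 1⟩ := by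
  induction k with
  | zero =>
    simp only [pow_zero, Aseq]
    refine SemidirectProduct.ext ?_ rfl
    funext i
    fin_cases i <;> simp [uu]
  | succ k ih =>
    rw [pow_succ', MulAut.mul_apply, ih, formulaF ψ hn]
    refine SemidirectProduct.ext ?_ rfl
    refine vec_congr _ _ _ _ ?_ ?_ <;>
    · simp only [toAdd_ofAdd]
      rw [pow_pow_eq]
      refine congrArg Multiplicative.ofAdd ?_
      push_cast [Aseq]
      simp only [ZMod.natCast_val, ZMod.cast_id]

end WC

namespace WC
variable {n : ℕ}

lemma odd_sum (ψ : MulAut (WreathC2 n)) (hn : 2 ≤ n) :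
    Odd (((Multiplicative.toAdd (aOf ψ)).val : ℤ) + ((Multiplicative.toAdd (bOf ψ)).val : ℤ)) := by
  have hu := unit_sum ψ hn
  set x : ZMod (2^n) := Multiplicative.toAdd (aOf ψ) + Multiplicative.toAdd (bOf ψ) with hx
  have hux : IsUnit ((x.val : ℕ) : ZMod (2^n)) := by
    rwa [ZMod.natCast_val, ZMod.cast_id]
  have hcop : Nat.Coprime x.val (2^n) := (ZMod.isUnit_iff_coprime x.val (2^n)).mp hux
  have hcop2 : Nat.Coprime x.val 2 :=
    Nat.Coprime.coprime_dvd_right (dvd_pow_self 2 (by omega : n ≠ 0)) hcop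
  have hodd : Odd x.val := Nat.coprime_two_right.mp hcop2
  have hval : x.val = ((Multiplicative.toAdd (aOf ψ)).val
      + (Multiplicative.toAdd (bOf ψ)).val) % (2^n) := ZMod.val_add _ _
  have h2dvd : 2 ∣ 2^n := dvd_pow_self 2 (by omega : n ≠ 0)
  have hoddsum : Odd ((Multiplicative.toAdd (aOf ψ)).val + (Multiplicative.toAdd (bOf ψ)).val) := by
    rw [Nat.odd_iff] at hodd ⊢
    rw [hval, Nat.mod_mod_of_dvd _ h2dvd] at hodd
    exact hodd
  obtain ⟨k, hk⟩ := hoddsum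
  exact ⟨(k : ℤ), by exact_mod_cast hk⟩

lemma iter_fix_e0 (ψ : MulAut (WreathC2 n)) (hn : 2 ≤ n) :
    (ψ ^ (2^n)) ⟨![uu n, 1], 1⟩ = ⟨![uu n, 1], 1⟩ := by
  rw [iter_e0 ψ hn (2^n)]
  obtain ⟨h1, h2⟩ := Aseq_key ((Multiplicative.toAdd (aOf ψ)).val : ℤ)
    ((Multiplicative.toAdd (bOf ψ)).val : ℤ) (odd_sum ψ hn) n
  have hA : (((Aseq ((Multiplicative.toAdd (aOf ψ)).val : ℤ)
      ((Multiplicative.toAdd (bOf ψ)).val : ℤ) (2^n)).1 : ℤ) : ZMod (2^n)) = 1 := by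
    have : ((((Aseq ((Multiplicative.toAdd (aOf ψ)).val : ℤ)
        ((Multiplicative.toAdd (bOf ψ)).val : ℤ) (2^n)).1 - 1 : ℤ)) : ZMod (2^n)) = 0 := by
      rw [ZMod.intCast_zmod_eq_zero_iff_dvd]
      exact_mod_cast h1
    push_cast at this
    linear_combination this
  have hB : (((Aseq ((Multiplicative.toAdd (aOf ψ)).val : ℤ)
      ((Multiplicative.toAdd (bOf ψ)).val : ℤ) (2^n)).2 : ℤ) : ZMod (2^n)) = 0 := by
    rw [ZMod.intCast_zmod_eq_zero_iff_dvd]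
    exact_mod_cast h2
  rw [hA, hB]
  refine SemidirectProduct.ext ?_ rfl
  refine vec_congr _ _ _ _ ?_ ?_ <;> simp [uu]

end WC

namespace WC
variable {n : ℕ}

lemma fix_base (χ : MulAut (WreathC2 n)) (hn : 2 ≤ n)
    (he : χ ⟨![uu n, 1], 1⟩ = ⟨![uu n, 1], 1⟩) (f : Fin 2 → Multiplicative (ZMod (2^n))) :
    χ ⟨f, 1⟩ = ⟨f, 1⟩ := by
  have ha : aOf χ = uu n := by rw [aOf, he]; simp
  have hb : bOf χ = 1 := by rw [bOf, he]; simp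
  conv_lhs => rw [fun_eta f]
  rw [formulaF χ hn, ha, hb]
  refine SemidirectProduct.ext ?_ rfl
  conv_rhs => rw [fun_eta f]
  refine vec_congr _ _ _ _ ?_ ?_ <;> simp [u_pow_val]

lemma t_sq : (⟨1, Equiv.swap 0 1⟩ : WreathC2 n) * ⟨1, Equiv.swap 0 1⟩ = 1 := by
  ext <;> simp

lemma base_mul_sigma (f g : Fin 2 → Multiplicative (ZMod (2^n))) :
    (⟨f, 1⟩ : WreathC2 n) * ⟨g, Equiv.swap 0 1⟩ = ⟨f * g, Equiv.swap 0 1⟩ := by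
  ext <;> simp

lemma chi_t (χ : MulAut (WreathC2 n)) (hn : 2 ≤ n) :
    χ ⟨1, Equiv.swap 0 1⟩
      = ⟨![(χ ⟨1, Equiv.swap 0 1⟩).left 0, ((χ ⟨1, Equiv.swap 0 1⟩).left 0)⁻¹],
          Equiv.swap 0 1⟩ := by
  have hT := psi_t χ hn
  have hsq : χ ⟨1, Equiv.swap 0 1⟩ * χ ⟨1, Equiv.swap 0 1⟩ = 1 := by
    rw [← map_mul, t_sq, map_one]
  rw [hT] at hsq
  have h0 := congrArg (fun z : WreathC2 n => z.left 0) hsq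
  simp [SemidirectProduct.mul_left] at h0
  have hinv : (χ ⟨1, Equiv.swap 0 1⟩).left 1 = ((χ ⟨1, Equiv.swap 0 1⟩).left 0)⁻¹ := by
    rw [eq_inv_iff_mul_eq_one, mul_comm]
    exact h0
  conv_lhs => rw [hT, fun_eta (χ ⟨1, Equiv.swap 0 1⟩).left]
  rw [hinv]

lemma chi_t_pow (χ : MulAut (WreathC2 n)) (hn : 2 ≤ n)
    (hbase : ∀ f, χ ⟨f, 1⟩ = ⟨f, 1⟩) (k : ℕ) :
    (χ ^ k) ⟨1, Equiv.swap 0 1⟩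
      = ⟨![((χ ⟨1, Equiv.swap 0 1⟩).left 0) ^ k, (((χ ⟨1, Equiv.swap 0 1⟩).left 0) ^ k)⁻¹],
          Equiv.swap 0 1⟩ := by
  induction k with
  | zero =>
    simp only [pow_zero, inv_one]
    refine SemidirectProduct.ext ?_ rfl
    rw [← one_vec]
    rfl
  | succ k ih =>
    rw [pow_succ', MulAut.mul_apply, ih, sigma_decomp, map_mul, hbase, chi_t χ hn,
      base_mul_sigma, vec_mul]
    refine SemidirectProduct.ext ?_ rfl
    refine vec_congr _ _ _ _ ?_ ?_ <;> simp [pow_succ, mul_inv, mul_comm]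

lemma pow_card (c : Multiplicative (ZMod (2^n))) : c ^ (2^n) = 1 := by
  apply Multiplicative.toAdd.injective
  simp [toAdd_pow, nsmul_eq_mul, ZMod.natCast_self]

lemma fix_all (χ : MulAut (WreathC2 n)) (hn : 2 ≤ n)
    (hbase : ∀ f, χ ⟨f, 1⟩ = ⟨f, 1⟩) (p : WreathC2 n) :
    (χ ^ (2^n)) p = p := by
  have hbase' : ∀ (k : ℕ) f, (χ ^ k) ⟨f, 1⟩ = ⟨f, 1⟩ := by
    intro k f
    induction k with
    | zero => simp
    | succ k ih => rw [pow_succ', MulAut.mul_apply, ih, hbase]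
  have ht : (χ ^ (2^n)) ⟨1, Equiv.swap 0 1⟩ = ⟨1, Equiv.swap 0 1⟩ := by
    rw [chi_t_pow χ hn hbase, pow_card]
    refine SemidirectProduct.ext ?_ rfl
    show (![(1 : Multiplicative (ZMod (2^n))), 1⁻¹]) = 1
    rw [inv_one, ← one_vec]
  have hp : p = ⟨p.left, p.right⟩ := rfl
  rcases perm_cases p.right with h | h
  · have : p = ⟨p.left, 1⟩ := by rw [hp, h]
    rw [this]; exact hbase' _ _
  · have : p = ⟨p.left, 1⟩ * ⟨1, Equiv.swap 0 1⟩ := by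
      rw [base_mul_sigma, mul_one, hp, h]
    rw [this, map_mul, hbase' _ _, ht]

end WC

theorem stmt1 (n : ℕ) (hn : 2 ≤ n) : IsPGroup 2 (MulAut (WreathC2 n)) := by
  intro ψ
  refine ⟨2 * n, ?_⟩
  have hsplit : ψ ^ (2 ^ (2 * n)) = (ψ ^ (2^n)) ^ (2^n) := by
    rw [← pow_mul, two_mul, pow_add]
  rw [hsplit]
  have hφ := WC.iter_fix_e0 ψ hn
  have hbase := WC.fix_base (ψ ^ (2^n)) hn hφ
  exact DFunLike.ext _ _ fun p => (WC.fix_all (ψ ^ (2^n)) hn hbase p).trans rfl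
end

section
/- Let n ≥ 2 and let P = C_{2^n} ≀ C_2. Then the 2-rank of P equals 2, i.e. every elementary abelian 2-subgroup of P has order at most 4, and P contains an elementary abelian subgroup of order 4. -/
open Equiv

/- auxiliary lemmas -/

lemma aux_zmod_tt (n : ℕ) (hn : 1 ≤ n) (x : ZMod (2 ^ n)) (hx : x + x = 0) :
    x = 0 ∨ x = ((2 ^ (n - 1) : ℕ) : ZMod (2 ^ n)) := by
  haveI : NeZero (2 ^ n) := ⟨by positivity⟩
  have hv : ((x.val + x.val : ℕ) : ZMod (2 ^ n)) = 0 := by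
    push_cast [ZMod.natCast_zmod_val]
    exact hx
  have hd : 2 ^ n ∣ x.val + x.val := (ZMod.natCast_eq_zero_iff _ _).mp hv
  have hlt : x.val < 2 ^ n := ZMod.val_lt x
  have h2 : 2 ^ (n - 1) + 2 ^ (n - 1) = 2 ^ n := by
    rw [← two_mul, ← pow_succ']
    congr 1
    omega
  have hval : x.val = 0 ∨ x.val = 2 ^ (n - 1) := by
    rcases hd with ⟨k, hk⟩
    have hk2 : k < 2 := by nlinarith
    interval_cases k <;> omega
  rcases hval with h | h
  · left; rw [← ZMod.natCast_zmod_val x, h]; simp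
  · right; rw [← ZMod.natCast_zmod_val x, h]

lemma aux_mult_tt (n : ℕ) (hn : 1 ≤ n) (x : Multiplicative (ZMod (2 ^ n)))
    (hx : x * x = 1) :
    x = 1 ∨ x = Multiplicative.ofAdd ((2 ^ (n - 1) : ℕ) : ZMod (2 ^ n)) := by
  have h := aux_zmod_tt n hn x.toAdd (congrArg Multiplicative.toAdd hx)
  rcases h with h | h
  · left; rw [← ofAdd_toAdd x, h]; rfl
  · right; rw [← ofAdd_toAdd x, h]

lemma aux_t_ne_one (n : ℕ) (hn : 1 ≤ n) :
    (Multiplicative.ofAdd ((2 ^ (n - 1) : ℕ) : ZMod (2 ^ n)) :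
      Multiplicative (ZMod (2 ^ n))) ≠ 1 := by
  haveI : NeZero (2 ^ n) := ⟨by positivity⟩
  intro h
  have h0 : ((2 ^ (n - 1) : ℕ) : ZMod (2 ^ n)) = 0 := congrArg Multiplicative.toAdd h
  rw [ZMod.natCast_eq_zero_iff] at h0
  have := Nat.le_of_dvd (by positivity) h0
  have h3 : (2:ℕ) ^ (n - 1) < 2 ^ n := Nat.pow_lt_pow_right (by norm_num) (by omega)
  omega

lemma aux_perm2 : ∀ σ : Equiv.Perm (Fin 2), σ = 1 ∨ σ = Equiv.swap 0 1 := by decide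

lemma aux_pin {G : Type*} [Group G] {t : G} (ht : t ≠ 1) {c x y : G}
    (hx : x = c ∨ x = c * t) (hy : y = c ∨ y = c * t) (h : (x = c) ↔ (y = c)) :
    x = y := by
  have hct : c * t ≠ c := fun hh =>
    ht (mul_left_cancel (a := c) (by rw [mul_one]; exact hh))
  rcases hx with rfl | rfl <;> rcases hy with rfl | rfl <;> simp_all

lemma aux_mul_left (n : ℕ) (g h : WreathC2 n) (i : Fin 2) :
    (g * h).left i = g.left i * h.left (g.right.symm i) := rfl

lemma aux_swap_ne : Equiv.swap (0 : Fin 2) 1 ≠ 1 := by decide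

lemma aux_mul_right (n : ℕ) (g h : WreathC2 n) : (g * h).right = g.right * h.right := rfl

lemma aux_sq_left (n : ℕ) (g : WreathC2 n) (h : g * g = 1) (i : Fin 2) :
    g.left i * g.left (g.right.symm i) = 1 := by
  have h1 := congrArg SemidirectProduct.left h
  have h2 := congrFun h1 i
  exact h2

set_option maxHeartbeats 1000000 in
theorem stmt2 (n : ℕ) (hn : 2 ≤ n) :
    (∀ H : Subgroup (WreathC2 n), (∀ g ∈ H, g ^ 2 = 1) → Nat.card H ≤ 4) ∧
    (∃ H : Subgroup (WreathC2 n), (∀ g ∈ H, g ^ 2 = 1) ∧ Nat.card H = 4) := by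
  have hn1 : 1 ≤ n := by omega
  set t : Multiplicative (ZMod (2 ^ n)) :=
    Multiplicative.ofAdd ((2 ^ (n - 1) : ℕ) : ZMod (2 ^ n)) with ht_def
  have ht1 : t ≠ 1 := aux_t_ne_one n hn1
  have h2sum : 2 ^ (n - 1) + 2 ^ (n - 1) = 2 ^ n := by
    rw [← two_mul, ← pow_succ']
    congr 1
    omega
  have htt : t * t = 1 := by
    have hcc : ((2 ^ (n - 1) : ℕ) : ZMod (2 ^ n)) + ((2 ^ (n - 1) : ℕ) : ZMod (2 ^ n)) = 0 := by
      rw [← Nat.cast_add, h2sum]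
      exact ZMod.natCast_self _
    rw [ht_def, ← ofAdd_add, hcc]
    rfl
  have hcard4 : Nat.card (Prop × Prop) = 4 := by
    rw [Nat.card_eq_fintype_card]
    simp
  constructor
  · -- upper bound
    intro H hH
    have hsq : ∀ g ∈ H, g * g = 1 := by
      intro g hg
      have := hH g hg
      rwa [pow_two] at this
    by_cases hA : ∀ g ∈ H, SemidirectProduct.right g = 1
    · -- all elements in the base group
      have hinj : Function.Injective
          (fun g : H => ((g.1.left 0 = 1, g.1.left 1 = 1) : Prop × Prop)) := by
        intro g g' h
        have h0 : (g.1.left 0 = 1) = (g'.1.left 0 = 1) := congrArg Prod.fst h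
        have h1 : (g.1.left 1 = 1) = (g'.1.left 1 = 1) := congrArg Prod.snd h
        have key : ∀ (x : H) (i : Fin 2), x.1.left i = 1 ∨ x.1.left i = t := by
          intro x i
          have hx := aux_sq_left n x.1 (hsq x.1 x.2) i
          rw [hA x.1 x.2] at hx
          exact aux_mult_tt n hn1 _ hx
        have e0 : g.1.left 0 = g'.1.left 0 :=
          aux_pin ht1 ((key g 0).imp id (fun h => by rw [h, one_mul]))
            ((key g' 0).imp id (fun h => by rw [h, one_mul])) (Iff.of_eq h0)
        have e1 : g.1.left 1 = g'.1.left 1 :=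
          aux_pin ht1 ((key g 1).imp id (fun h => by rw [h, one_mul]))
            ((key g' 1).imp id (fun h => by rw [h, one_mul])) (Iff.of_eq h1)
        apply Subtype.ext
        apply SemidirectProduct.ext
        · funext i
          fin_cases i
          · exact e0
          · exact e1
        · rw [hA g.1 g.2, hA g'.1 g'.2]
      calc Nat.card H ≤ Nat.card (Prop × Prop) := Nat.card_le_card_of_injective _ hinj
        _ = 4 := hcard4
    · -- there is an element with nontrivial permutation part
      push_neg at hA
      obtain ⟨g₀, hg₀H, hg₀⟩ := hA
      have hg₀r : g₀.right = Equiv.swap 0 1 := (aux_perm2 g₀.right).resolve_left hg₀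
      set a : Multiplicative (ZMod (2 ^ n)) := g₀.left 0 with ha_def
      have hsy0 : (Equiv.swap (0 : Fin 2) 1).symm 0 = 1 := by decide
      have hg₀1 : g₀.left 1 = a⁻¹ := by
        have := aux_sq_left n g₀ (hsq g₀ hg₀H) 0
        rw [hg₀r, hsy0] at this
        exact (inv_eq_of_mul_eq_one_right this).symm
      -- key facts about arbitrary elements of H
      have keyBase : ∀ g ∈ H, g.right = 1 →
          (g.left 0 = 1 ∨ g.left 0 = t) ∧ g.left 1 = (g.left 0)⁻¹ := by
        intro g hg hr
        constructor
        · have hx := aux_sq_left n g (hsq g hg) 0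
          rw [hr] at hx
          exact aux_mult_tt n hn1 _ hx
        · have hmem : g * g₀ ∈ H := H.mul_mem hg hg₀H
          have hx := aux_sq_left n (g * g₀) (hsq _ hmem) 0
          have hr' : (g * g₀).right = Equiv.swap 0 1 := by
            rw [aux_mul_right, hr, one_mul, hg₀r]
          rw [hr', hsy0, aux_mul_left, aux_mul_left, hr] at hx
          simp only [Equiv.Perm.one_def, Equiv.refl_symm, Equiv.refl_apply] at hx
          rw [hg₀1, ← ha_def] at hx
          have : g.left 0 * g.left 1 = 1 := by
            rw [mul_mul_mul_comm, mul_inv_cancel, mul_one] at hx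
            exact hx
          exact (inv_eq_of_mul_eq_one_right this).symm
      have keySwap : ∀ g ∈ H, g.right = Equiv.swap 0 1 →
          (g.left 0 = a ∨ g.left 0 = a * t) ∧ g.left 1 = (g.left 0)⁻¹ := by
        intro g hg hr
        have hself : g.left 1 = (g.left 0)⁻¹ := by
          have hx := aux_sq_left n g (hsq g hg) 0
          rw [hr, hsy0] at hx
          exact (inv_eq_of_mul_eq_one_right hx).symm
        refine ⟨?_, hself⟩
        have hmem : g * g₀ ∈ H := H.mul_mem hg hg₀H
        have hr' : (g * g₀).right = 1 := by
          rw [aux_mul_right, hr, hg₀r, Equiv.swap_mul_self]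
        have hx := aux_sq_left n (g * g₀) (hsq _ hmem) 0
        rw [hr'] at hx
        simp only [Equiv.Perm.one_def, Equiv.refl_symm, Equiv.refl_apply] at hx
        rw [aux_mul_left, hr, hsy0, hg₀1] at hx
        rcases aux_mult_tt n hn1 _ hx with h | h
        · left
          rwa [mul_inv_eq_one] at h
        · right
          rw [mul_inv_eq_iff_eq_mul] at h
          rw [h]
          exact mul_comm t a
      have hinj : Function.Injective
          (fun g : H => ((g.1.right = 1,
            g.1.left 0 = if g.1.right = 1 then 1 else a) : Prop × Prop)) := by
        intro g g' h
        have h0 : (g.1.right = 1) = (g'.1.right = 1) := congrArg Prod.fst h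
        have h1 : (g.1.left 0 = if g.1.right = 1 then 1 else a)
            = (g'.1.left 0 = if g'.1.right = 1 then 1 else a) := congrArg Prod.snd h
        by_cases hr : g.1.right = 1
        · have hr' : g'.1.right = 1 := (Iff.of_eq h0).mp hr
          rw [if_pos hr] at h1
          rw [if_pos hr'] at h1
          obtain ⟨hb, hb1⟩ := keyBase g.1 g.2 hr
          obtain ⟨hb', hb1'⟩ := keyBase g'.1 g'.2 hr'
          have e0 : g.1.left 0 = g'.1.left 0 :=
            aux_pin ht1 (hb.imp id (fun h => by rw [h, one_mul]))
              (hb'.imp id (fun h => by rw [h, one_mul])) (Iff.of_eq h1)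
          have e1 : g.1.left 1 = g'.1.left 1 := by rw [hb1, hb1', e0]
          apply Subtype.ext
          apply SemidirectProduct.ext
          · funext i
            fin_cases i
            · exact e0
            · exact e1
          · rw [hr, hr']
        · have hr' : ¬ g'.1.right = 1 := fun hc => hr ((Iff.of_eq h0).mpr hc)
          have hrs : g.1.right = Equiv.swap 0 1 := (aux_perm2 _).resolve_left hr
          have hrs' : g'.1.right = Equiv.swap 0 1 := (aux_perm2 _).resolve_left hr'
          rw [if_neg hr] at h1
          rw [if_neg hr'] at h1
          obtain ⟨hb, hb1⟩ := keySwap g.1 g.2 hrs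
          obtain ⟨hb', hb1'⟩ := keySwap g'.1 g'.2 hrs'
          have e0 : g.1.left 0 = g'.1.left 0 := aux_pin ht1 hb hb' (Iff.of_eq h1)
          have e1 : g.1.left 1 = g'.1.left 1 := by rw [hb1, hb1', e0]
          apply Subtype.ext
          apply SemidirectProduct.ext
          · funext i
            fin_cases i
            · exact e0
            · exact e1
          · rw [hrs, hrs']
      calc Nat.card H ≤ Nat.card (Prop × Prop) := Nat.card_le_card_of_injective _ hinj
        _ = 4 := hcard4
  · -- existence
    set u : WreathC2 n := ⟨fun _ => t, 1⟩ with hu_def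
    set v : WreathC2 n := ⟨1, Equiv.swap 0 1⟩ with hv_def
    set w : WreathC2 n := ⟨fun _ => t, Equiv.swap 0 1⟩ with hw_def
    have huu : u * u = 1 := by
      apply SemidirectProduct.ext
      · funext i; exact htt
      · exact mul_one 1
    have hvv : v * v = 1 := by
      apply SemidirectProduct.ext
      · funext i; exact mul_one 1
      · exact Equiv.swap_mul_self 0 1
    have hww : w * w = 1 := by
      apply SemidirectProduct.ext
      · funext i; exact htt
      · exact Equiv.swap_mul_self 0 1
    have huv : u * v = w := by
      apply SemidirectProduct.ext
      · funext i; exact mul_one t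
      · exact one_mul _
    have hvu : v * u = w := by
      apply SemidirectProduct.ext
      · funext i; exact one_mul t
      · exact mul_one _
    have huw : u * w = v := by
      apply SemidirectProduct.ext
      · funext i; exact htt
      · exact one_mul _
    have hwu : w * u = v := by
      apply SemidirectProduct.ext
      · funext i; exact htt
      · exact mul_one _
    have hvw : v * w = u := by
      apply SemidirectProduct.ext
      · funext i; exact one_mul t
      · exact Equiv.swap_mul_self 0 1
    have hwv : w * v = u := by
      apply SemidirectProduct.ext
      · funext i; exact mul_one t
      · exact Equiv.swap_mul_self 0 1
    have hu1 : u ≠ 1 := by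
      intro h
      exact ht1 (congrFun (congrArg SemidirectProduct.left h) 0)
    have hv1 : v ≠ 1 := by
      intro h
      exact aux_swap_ne (congrArg SemidirectProduct.right h)
    have hw1 : w ≠ 1 := by
      intro h
      exact ht1 (congrFun (congrArg SemidirectProduct.left h) 0)
    have huv' : u ≠ v := by
      intro h
      exact aux_swap_ne (congrArg SemidirectProduct.right h).symm
    have huw' : u ≠ w := by
      intro h
      exact aux_swap_ne (congrArg SemidirectProduct.right h).symm
    have hvw' : v ≠ w := by
      intro h
      exact ht1 (congrFun (congrArg SemidirectProduct.left h) 0).symm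
    refine ⟨{ carrier := {1, u, v, w}
              one_mem' := Or.inl rfl
              mul_mem' := ?_
              inv_mem' := ?_ }, ?_, ?_⟩
    · rintro x y (rfl | rfl | rfl | rfl) (rfl | rfl | rfl | rfl) <;>
        simp only [one_mul, mul_one, huu, hvv, hww, huv, hvu, huw, hwu, hvw, hwv,
          Set.mem_insert_iff, Set.mem_singleton_iff] <;> tauto
    · have hui : u⁻¹ = u := inv_eq_of_mul_eq_one_left huu
      have hvi : v⁻¹ = v := inv_eq_of_mul_eq_one_left hvv
      have hwi : w⁻¹ = w := inv_eq_of_mul_eq_one_left hww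
      rintro x (rfl | rfl | rfl | rfl) <;>
        simp only [inv_one, hui, hvi, hwi, Set.mem_insert_iff, Set.mem_singleton_iff] <;> tauto
    · rintro g (rfl | rfl | rfl | rfl) <;> rw [pow_two]
      · exact mul_one 1
      · exact huu
      · exact hvv
      · exact hww
    · have h1nm : (1 : WreathC2 n) ∉ ({u, v, w} : Set (WreathC2 n)) := by
        intro h
        rcases h with h | h | h
        · exact hu1 h.symm
        · exact hv1 h.symm
        · exact hw1 h.symm
      have hunm : u ∉ ({v, w} : Set (WreathC2 n)) := by
        intro h
        rcases h with h | h
        · exact huv' h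
        · exact huw' h
      show Nat.card ({1, u, v, w} : Set (WreathC2 n)) = 4
      rw [Nat.card_coe_set_eq]
      rw [Set.ncard_insert_of_notMem h1nm, Set.ncard_insert_of_notMem hunm,
        Set.ncard_pair hvw']
end

section
/- Let n ≥ 2 and let P = C_{2^n} ≀ C_2. Then the quotient P/Z(P) is isomorphic to the dihedral group D_{2^{n+1}} of order 2^{n+1}. -/
open Equiv

lemma perm_fin_two (ρ : Equiv.Perm (Fin 2)) : ρ = 1 ∨ ρ = Equiv.swap 0 1 := by
  revert ρ; decide

lemma swap_ne_one : (Equiv.swap (0 : Fin 2) 1) ≠ 1 := by decide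

/-- The quotient map to the dihedral group. -/
def toDih (n : ℕ) : WreathC2 n →* DihedralGroup (2 ^ n) where
  toFun x := if x.right = 1
    then DihedralGroup.r (Multiplicative.toAdd (x.left 0) - Multiplicative.toAdd (x.left 1))
    else DihedralGroup.sr (Multiplicative.toAdd (x.left 1) - Multiplicative.toAdd (x.left 0))
  map_one' := by simp
  map_mul' x y := by
    rw [SemidirectProduct.mul_def]
    obtain ⟨f, σ⟩ := x
    obtain ⟨g, τ⟩ := y
    rcases perm_fin_two σ with rfl | rfl <;> rcases perm_fin_two τ with rfl | rfl <;>
      simp [-SemidirectProduct.mk_eq_inl_mul_inr, Equiv.Perm.one_symm, SemidirectProduct.mul_left, SemidirectProduct.mul_right, permAut, swap_ne_one,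
        MulEquiv.arrowCongr, toAdd_mul, DihedralGroup.r_mul_r, DihedralGroup.r_mul_sr,
        DihedralGroup.sr_mul_r, DihedralGroup.sr_mul_sr] <;>
      ring_nf

theorem stmt3 (n : ℕ) (hn : 2 ≤ n) :
    Nonempty ((WreathC2 n ⧸ Subgroup.center (WreathC2 n)) ≃* DihedralGroup (2 ^ n)) := by
  have hsurj : Function.Surjective (toDih n) := by
    intro x
    cases x with
    | r j =>
        exact ⟨⟨fun i => Multiplicative.ofAdd (if i = 0 then j else 0), 1⟩, by
          simp [toDih]⟩
    | sr j =>
        refine ⟨⟨fun i => Multiplicative.ofAdd (if i = 0 then 0 else j), Equiv.swap 0 1⟩, ?_⟩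
        simp [toDih, swap_ne_one]
  have hone : (1 : ZMod (2 ^ n)) ≠ 0 := by
    have h4 : (4 : ℕ) ≤ 2 ^ n := by
      calc (4 : ℕ) = 2 ^ 2 := rfl
      _ ≤ 2 ^ n := Nat.pow_le_pow_right (by norm_num) hn
    haveI : Fact (1 < 2 ^ n) := ⟨by omega⟩
    exact one_ne_zero
  have hker : (toDih n).ker = Subgroup.center (WreathC2 n) := by
    ext x
    obtain ⟨f, σ⟩ := x
    constructor
    · intro hx
      simp only [MonoidHom.mem_ker, toDih, MonoidHom.coe_mk, OneHom.coe_mk] at hx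
      rcases perm_fin_two σ with rfl | rfl
      · simp only [if_pos rfl, DihedralGroup.one_def] at hx
        have h2 : Multiplicative.toAdd (f 0) - Multiplicative.toAdd (f 1) = 0 := by
          injection hx
        have hf : Multiplicative.toAdd (f 0) = Multiplicative.toAdd (f 1) := by
          linear_combination h2
        have hconst : ∀ i, f i = f 0 := by
          intro i
          fin_cases i
          · rfl
          · exact (Multiplicative.toAdd.injective hf).symm
        rw [Subgroup.mem_center_iff]
        rintro ⟨g, τ⟩
        refine SemidirectProduct.ext ?_ ?_
        · show g * (permAut _ _ τ) f = f * (permAut _ _ 1) g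
          ext i
          simp only [permAut, MonoidHom.coe_mk, OneHom.coe_mk, MulEquiv.arrowCongr,
            MulEquiv.coe_mk, Equiv.coe_fn_mk, MulEquiv.refl_apply, Pi.mul_apply, map_one,
            MulAut.one_apply]
          rw [hconst (τ.symm i), hconst i, mul_comm]
        · show τ * 1 = 1 * τ
          simp
      · simp only [swap_ne_one, if_neg, DihedralGroup.one_def, reduceIte] at hx
        exact absurd hx (by simp [-DihedralGroup.r_zero])
    · intro hx
      rw [Subgroup.mem_center_iff] at hx
      -- First: `f` is constant, from commutation with `(1, swap)`.
      have h1 := congrArg SemidirectProduct.left (hx ⟨1, Equiv.swap 0 1⟩)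
      simp only [SemidirectProduct.mul_left, map_one, one_mul, MulAut.one_apply] at h1
      have hf : f 1 = f 0 := by
        have h10 := congrFun h1 0
        simpa [permAut, MulEquiv.arrowCongr] using h10
      -- Second: `σ = 1`, from commutation with a nonconstant base element.
      set g0 : Fin 2 → Multiplicative (ZMod (2 ^ n)) :=
        fun i => Multiplicative.ofAdd (if i = 0 then 1 else 0) with hg0
      have h2 := congrArg SemidirectProduct.left (hx ⟨g0, 1⟩)
      simp only [SemidirectProduct.mul_left, map_one, MulAut.one_apply] at h2
      have hσ : σ = 1 := by
        rcases perm_fin_two σ with h | h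
        · exact h
        · exfalso
          have h21 := congrFun h2 1
          subst h
          simp [permAut, MulEquiv.arrowCongr, hg0, mul_comm] at h21
          exact hone (by exact_mod_cast h21)
      subst hσ
      simp [MonoidHom.mem_ker, toDih, hf, DihedralGroup.one_def, -DihedralGroup.r_zero]
  exact ⟨(QuotientGroup.quotientMulEquivOfEq hker.symm).trans
    (QuotientGroup.quotientKerEquivOfSurjective (toDih n) hsurj)⟩
end

section
/- Let A be a finite-dimensional algebra over a field k, X a finite-dimensional A-module and Y a submodule of X such that X/Y is simple and the socle soc(Y) is simple. If Y is not a direct summand of X, then soc(X) = soc(Y); in particular X is indecomposable. -/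
/-- The socle of the submodule `Y` of `X`, viewed inside `X`: the sum of all
simple submodules of `X` contained in `Y` (simple submodules are the atoms of
the submodule lattice). -/
def socleIn {A X : Type*} [Ring A] [AddCommGroup X] [Module A X]
    (Y : Submodule A X) : Submodule A X :=
  sSup {m : Submodule A X | m ≤ Y ∧ IsAtom m}

theorem stmt9 (k A X : Type) [Field k] [Ring A] [Algebra k A] [FiniteDimensional k A]
    [AddCommGroup X] [Module k X] [Module A X] [IsScalarTower k A X]
    [FiniteDimensional k X]
    (Y : Submodule A X)
    (hquot : IsSimpleModule A (X ⧸ Y))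
    (hsoc : IsAtom (socleIn Y))
    (hnotsum : ¬ ∃ S : Submodule A X, IsCompl Y S) :
    socleIn (⊤ : Submodule A X) = socleIn Y ∧
    ∀ S T : Submodule A X, IsCompl S T → S = ⊥ ∨ T = ⊥ := by
  have hco : IsCoatom Y := isSimpleModule_iff_isCoatom.mp hquot
  have hatom_le : ∀ m : Submodule A X, IsAtom m → m ≤ Y := by
    intro m hm
    by_contra h
    apply hnotsum
    refine ⟨m, disjoint_iff.mpr ?_, codisjoint_iff.mpr ?_⟩
    · rcases hm.le_iff.mp (inf_le_right : Y ⊓ m ≤ m) with h1 | h1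
      · exact h1
      · exact absurd (h1 ▸ (inf_le_left : Y ⊓ m ≤ Y)) h
    · exact hco.2 _ (left_lt_sup.mpr h)
  have hset : {m : Submodule A X | m ≤ (⊤ : Submodule A X) ∧ IsAtom m}
      = {m : Submodule A X | m ≤ Y ∧ IsAtom m} := by
    ext m
    simp only [Set.mem_setOf_eq, le_top, true_and]
    exact ⟨fun hm => ⟨hatom_le m hm, hm⟩, fun hm => hm.2⟩
  have hsocle : socleIn (⊤ : Submodule A X) = socleIn Y := by
    unfold socleIn; rw [hset]
  refine ⟨hsocle, ?_⟩
  have : IsArtinian A X := isArtinian_of_tower k inferInstance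
  have hAtomic : IsAtomic (Submodule A X) :=
    isAtomic_of_orderBot_wellFounded_lt wellFounded_lt
  intro S T hST
  by_contra hcon
  push_neg at hcon
  obtain ⟨hS, hT⟩ := hcon
  obtain ⟨mS, hmS, hmS_le⟩ := (hAtomic.eq_bot_or_exists_atom_le S).resolve_left hS
  obtain ⟨mT, hmT, hmT_le⟩ := (hAtomic.eq_bot_or_exists_atom_le T).resolve_left hT
  have e1 : mS = socleIn Y :=
    (hsoc.le_iff.mp (le_sSup ⟨hatom_le _ hmS, hmS⟩)).resolve_left hmS.1
  have e2 : mT = socleIn Y :=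
    (hsoc.le_iff.mp (le_sSup ⟨hatom_le _ hmT, hmT⟩)).resolve_left hmT.1
  have hle : socleIn Y ≤ S ⊓ T := le_inf (e1 ▸ hmS_le) (e2 ▸ hmT_le)
  rw [hST.inf_eq_bot] at hle
  exact hsoc.1 (le_bot_iff.mp hle)
end
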